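/- arXiv:2009.03552 — 3 statements merged into one kernel-verified Lean document; each statement's English description precedes it below -/
import Mathlib

section
/- Let (L₁,≤₁) and (L₂,≤₂) be linear orders, let R = L₁ ∩ L₂, and suppose ≤₁ and ≤₂ agree on R. Then the relation ≤ on L₁ ∪ L₂ defined by: x ≤ y iff (x,y ∈ L₁ and x ≤₁ y), or (x,y ∈ L₂ and x ≤₂ y), or (x ∈ L₁ \ R, y ∈ L₂ \ R, and there exists r ∈ R with x ≤₁ r and r ≤₂ y), or (x ∈ L₂ \ R, y ∈ L₁ \ R, and there is no r ∈ R with y ≤₁ r and r ≤₂ x), is a linear order on L₁ ∪ L₂ extending both ≤₁ and ≤₂, and it satisfies: for all l₁ ∈ L₁ \ R and l₂ ∈ L₂ \ R, l₁ < l₂ iff there exists r ∈ R with l₁ <₁ r and r <₂ l₂. -/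
/-- `r` is a linear order on the set `S`. -/
def IsLinearOrderOn {α : Type*} (S : Set α) (r : α → α → Prop) : Prop :=
  (∀ x ∈ S, r x x) ∧
  (∀ x ∈ S, ∀ y ∈ S, r x y → r y x → x = y) ∧
  (∀ x ∈ S, ∀ y ∈ S, ∀ z ∈ S, r x y → r y z → r x z) ∧
  (∀ x ∈ S, ∀ y ∈ S, r x y ∨ r y x)

theorem stmt_0 {α : Type*} (L₁ L₂ : Set α) (r₁ r₂ : α → α → Prop)
    (h₁ : IsLinearOrderOn L₁ r₁) (h₂ : IsLinearOrderOn L₂ r₂)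
    (R : Set α) (hR : R = L₁ ∩ L₂)
    (hagree : ∀ x ∈ R, ∀ y ∈ R, r₁ x y ↔ r₂ x y)
    (rc : α → α → Prop)
    (hrc : ∀ x y, rc x y ↔
      (x ∈ L₁ ∧ y ∈ L₁ ∧ r₁ x y) ∨
      (x ∈ L₂ ∧ y ∈ L₂ ∧ r₂ x y) ∨
      (x ∈ L₁ \ R ∧ y ∈ L₂ \ R ∧ ∃ r ∈ R, r₁ x r ∧ r₂ r y) ∨
      (x ∈ L₂ \ R ∧ y ∈ L₁ \ R ∧ ¬ ∃ r ∈ R, r₁ y r ∧ r₂ r x)) :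
    IsLinearOrderOn (L₁ ∪ L₂) rc ∧
    (∀ x ∈ L₁, ∀ y ∈ L₁, rc x y ↔ r₁ x y) ∧
    (∀ x ∈ L₂, ∀ y ∈ L₂, rc x y ↔ r₂ x y) ∧
    (∀ l₁ ∈ L₁ \ R, ∀ l₂ ∈ L₂ \ R,
      (rc l₁ l₂ ∧ ¬ rc l₂ l₁) ↔
        ∃ r ∈ R, (r₁ l₁ r ∧ ¬ r₁ r l₁) ∧ (r₂ r l₂ ∧ ¬ r₂ l₂ r)) := by
  subst hR
  obtain ⟨re₁, as₁, tr₁, to₁⟩ := h₁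
  obtain ⟨re₂, as₂, tr₂, to₂⟩ := h₂
  -- rc restricted to L₁ is r₁
  have hext1 : ∀ x ∈ L₁, ∀ y ∈ L₁, rc x y ↔ r₁ x y := by
    intro x hx y hy
    rw [hrc]
    constructor
    · rintro (⟨_, _, h⟩ | ⟨hx2, hy2, h⟩ | ⟨_, ⟨hy2, hyR⟩, _⟩ | ⟨⟨hx2, hxR⟩, _, _⟩)
      · exact h
      · exact (hagree x ⟨hx, hx2⟩ y ⟨hy, hy2⟩).mpr h
      · exact absurd ⟨hy, hy2⟩ hyR
      · exact absurd ⟨hx, hx2⟩ hxR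
    · intro h; exact Or.inl ⟨hx, hy, h⟩
  -- rc restricted to L₂ is r₂
  have hext2 : ∀ x ∈ L₂, ∀ y ∈ L₂, rc x y ↔ r₂ x y := by
    intro x hx y hy
    rw [hrc]
    constructor
    · rintro (⟨hx1, hy1, h⟩ | ⟨_, _, h⟩ | ⟨⟨hx1, hxR⟩, _, _⟩ | ⟨_, ⟨hy1, hyR⟩, _⟩)
      · exact (hagree x ⟨hx1, hx⟩ y ⟨hy1, hy⟩).mp h
      · exact h
      · exact absurd ⟨hx1, hx⟩ hxR
      · exact absurd ⟨hy1, hy⟩ hyR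
    · intro h; exact Or.inr (Or.inl ⟨hx, hy, h⟩)
  -- rc from A = L₁ \ L₂ to C = L₂ \ L₁
  have hAC : ∀ x, x ∈ L₁ → x ∉ L₂ → ∀ y, y ∈ L₂ → y ∉ L₁ →
      (rc x y ↔ ∃ r ∈ L₁ ∩ L₂, r₁ x r ∧ r₂ r y) := by
    intro x hx1 hx2 y hy2 hy1
    rw [hrc]
    constructor
    · rintro (⟨_, hy1', _⟩ | ⟨hx2', _, _⟩ | ⟨_, _, h⟩ | ⟨⟨hx2', _⟩, _, _⟩)
      · exact absurd hy1' hy1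
      · exact absurd hx2' hx2
      · exact h
      · exact absurd hx2' hx2
    · intro h
      exact Or.inr (Or.inr (Or.inl ⟨⟨hx1, fun h' => hx2 h'.2⟩, ⟨hy2, fun h' => hy1 h'.1⟩, h⟩))
  -- rc from C = L₂ \ L₁ to A = L₁ \ L₂
  have hCA : ∀ x, x ∈ L₂ → x ∉ L₁ → ∀ y, y ∈ L₁ → y ∉ L₂ →
      (rc x y ↔ ¬ ∃ r ∈ L₁ ∩ L₂, r₁ y r ∧ r₂ r x) := by
    intro x hx2 hx1 y hy1 hy2
    rw [hrc]
    constructor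
    · rintro (⟨hx1', _, _⟩ | ⟨_, hy2', _⟩ | ⟨⟨hx1', _⟩, _, _⟩ | ⟨_, _, h⟩)
      · exact absurd hx1' hx1
      · exact absurd hy2' hy2
      · exact absurd hx1' hx1
      · exact h
    · intro h
      exact Or.inr (Or.inr (Or.inr ⟨⟨hx2, fun h' => hx1 h'.1⟩, ⟨hy1, fun h' => hy2 h'.2⟩, h⟩))
  refine ⟨⟨?_, ?_, ?_, ?_⟩, hext1, hext2, ?_⟩
  · -- reflexivity
    rintro x (hx | hx)
    · exact (hext1 x hx x hx).mpr (re₁ x hx)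
    · exact (hext2 x hx x hx).mpr (re₂ x hx)
  · -- antisymmetry
    intro x hx y hy hxy hyx
    by_cases hx1 : x ∈ L₁ <;> by_cases hy1 : y ∈ L₁
    · exact as₁ x hx1 y hy1 ((hext1 x hx1 y hy1).mp hxy) ((hext1 y hy1 x hx1).mp hyx)
    · have hy2 : y ∈ L₂ := hy.resolve_left hy1
      by_cases hx2 : x ∈ L₂
      · exact as₂ x hx2 y hy2 ((hext2 x hx2 y hy2).mp hxy) ((hext2 y hy2 x hx2).mp hyx)
      · exact absurd ((hAC x hx1 hx2 y hy2 hy1).mp hxy) ((hCA y hy2 hy1 x hx1 hx2).mp hyx)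
    · have hx2 : x ∈ L₂ := hx.resolve_left hx1
      by_cases hy2 : y ∈ L₂
      · exact as₂ x hx2 y hy2 ((hext2 x hx2 y hy2).mp hxy) ((hext2 y hy2 x hx2).mp hyx)
      · exact absurd ((hAC y hy1 hy2 x hx2 hx1).mp hyx) ((hCA x hx2 hx1 y hy1 hy2).mp hxy)
    · have hx2 : x ∈ L₂ := hx.resolve_left hx1
      have hy2 : y ∈ L₂ := hy.resolve_left hy1
      exact as₂ x hx2 y hy2 ((hext2 x hx2 y hy2).mp hxy) ((hext2 y hy2 x hx2).mp hyx)
  · -- transitivity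
    intro x hx y hy z hz hxy hyz
    by_cases hx1 : x ∈ L₁ <;> by_cases hy1 : y ∈ L₁ <;> by_cases hz1 : z ∈ L₁
    -- (L₁, L₁, L₁)
    · exact (hext1 x hx1 z hz1).mpr (tr₁ x hx1 y hy1 z hz1
        ((hext1 x hx1 y hy1).mp hxy) ((hext1 y hy1 z hz1).mp hyz))
    -- (L₁, L₁, C)
    · have hz2 : z ∈ L₂ := hz.resolve_left hz1
      have hxy1 : r₁ x y := (hext1 x hx1 y hy1).mp hxy
      by_cases hy2 : y ∈ L₂
      · have hyz2 : r₂ y z := (hext2 y hy2 z hz2).mp hyz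
        by_cases hx2 : x ∈ L₂
        · exact (hext2 x hx2 z hz2).mpr (tr₂ x hx2 y hy2 z hz2
            ((hagree x ⟨hx1, hx2⟩ y ⟨hy1, hy2⟩).mp hxy1) hyz2)
        · exact (hAC x hx1 hx2 z hz2 hz1).mpr ⟨y, ⟨hy1, hy2⟩, hxy1, hyz2⟩
      · obtain ⟨r, hrR, hyr, hrz⟩ := (hAC y hy1 hy2 z hz2 hz1).mp hyz
        have hxr : r₁ x r := tr₁ x hx1 y hy1 r hrR.1 hxy1 hyr
        by_cases hx2 : x ∈ L₂
        · exact (hext2 x hx2 z hz2).mpr (tr₂ x hx2 r hrR.2 z hz2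
            ((hagree x ⟨hx1, hx2⟩ r hrR).mp hxr) hrz)
        · exact (hAC x hx1 hx2 z hz2 hz1).mpr ⟨r, hrR, hxr, hrz⟩
    -- (L₁, C, L₁)
    · have hy2 : y ∈ L₂ := hy.resolve_left hy1
      refine (hext1 x hx1 z hz1).mpr ?_
      by_cases hx2 : x ∈ L₂ <;> by_cases hz2 : z ∈ L₂
      · exact (hagree x ⟨hx1, hx2⟩ z ⟨hz1, hz2⟩).mpr (tr₂ x hx2 y hy2 z hz2
          ((hext2 x hx2 y hy2).mp hxy) ((hext2 y hy2 z hz2).mp hyz))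
      · have hxy2 : r₂ x y := (hext2 x hx2 y hy2).mp hxy
        have hne := (hCA y hy2 hy1 z hz1 hz2).mp hyz
        rcases to₁ x hx1 z hz1 with h | h
        · exact h
        · exact absurd ⟨x, ⟨hx1, hx2⟩, h, hxy2⟩ hne
      · obtain ⟨r, hrR, hxr, hry⟩ := (hAC x hx1 hx2 y hy2 hy1).mp hxy
        have hyz2 : r₂ y z := (hext2 y hy2 z hz2).mp hyz
        exact tr₁ x hx1 r hrR.1 z hz1 hxr
          ((hagree r hrR z ⟨hz1, hz2⟩).mpr (tr₂ r hrR.2 y hy2 z hz2 hry hyz2))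
      · obtain ⟨r, hrR, hxr, hry⟩ := (hAC x hx1 hx2 y hy2 hy1).mp hxy
        have hne := (hCA y hy2 hy1 z hz1 hz2).mp hyz
        rcases to₁ x hx1 z hz1 with h | h
        · exact h
        · exact absurd ⟨r, hrR, tr₁ z hz1 x hx1 r hrR.1 h hxr, hry⟩ hne
    -- (L₁, C, C)
    · have hy2 : y ∈ L₂ := hy.resolve_left hy1
      have hz2 : z ∈ L₂ := hz.resolve_left hz1
      have hyz2 : r₂ y z := (hext2 y hy2 z hz2).mp hyz
      by_cases hx2 : x ∈ L₂
      · exact (hext2 x hx2 z hz2).mpr (tr₂ x hx2 y hy2 z hz2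
          ((hext2 x hx2 y hy2).mp hxy) hyz2)
      · obtain ⟨r, hrR, hxr, hry⟩ := (hAC x hx1 hx2 y hy2 hy1).mp hxy
        exact (hAC x hx1 hx2 z hz2 hz1).mpr ⟨r, hrR, hxr, tr₂ r hrR.2 y hy2 z hz2 hry hyz2⟩
    -- (C, L₁, L₁)
    · have hx2 : x ∈ L₂ := hx.resolve_left hx1
      have hyz1 : r₁ y z := (hext1 y hy1 z hz1).mp hyz
      by_cases hy2 : y ∈ L₂ <;> by_cases hz2 : z ∈ L₂
      · exact (hext2 x hx2 z hz2).mpr (tr₂ x hx2 y hy2 z hz2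
          ((hext2 x hx2 y hy2).mp hxy) ((hagree y ⟨hy1, hy2⟩ z ⟨hz1, hz2⟩).mp hyz1))
      · have hxy2 : r₂ x y := (hext2 x hx2 y hy2).mp hxy
        refine (hCA x hx2 hx1 z hz1 hz2).mpr ?_
        rintro ⟨s, hsR, hzs, hsx⟩
        have hys : r₁ y s := tr₁ y hy1 z hz1 s hsR.1 hyz1 hzs
        have hsy : r₂ s y := tr₂ s hsR.2 x hx2 y hy2 hsx hxy2
        have : s = y := as₂ s hsR.2 y hy2 hsy ((hagree y ⟨hy1, hy2⟩ s hsR).mp hys)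
        subst this
        have : x = s := as₂ x hx2 s hsR.2 hxy2 hsx
        exact hx1 (this ▸ hsR.1)
      · have hne := (hCA x hx2 hx1 y hy1 hy2).mp hxy
        refine (hext2 x hx2 z hz2).mpr ?_
        rcases to₂ x hx2 z hz2 with h | h
        · exact h
        · exact absurd ⟨z, ⟨hz1, hz2⟩, hyz1, h⟩ hne
      · have hne := (hCA x hx2 hx1 y hy1 hy2).mp hxy
        refine (hCA x hx2 hx1 z hz1 hz2).mpr ?_
        rintro ⟨s, hsR, hzs, hsx⟩
        exact hne ⟨s, hsR, tr₁ y hy1 z hz1 s hsR.1 hyz1 hzs, hsx⟩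
    -- (C, L₁, C)
    · have hx2 : x ∈ L₂ := hx.resolve_left hx1
      have hz2 : z ∈ L₂ := hz.resolve_left hz1
      refine (hext2 x hx2 z hz2).mpr ?_
      by_cases hy2 : y ∈ L₂
      · exact tr₂ x hx2 y hy2 z hz2 ((hext2 x hx2 y hy2).mp hxy) ((hext2 y hy2 z hz2).mp hyz)
      · have hne := (hCA x hx2 hx1 y hy1 hy2).mp hxy
        obtain ⟨r, hrR, hyr, hrz⟩ := (hAC y hy1 hy2 z hz2 hz1).mp hyz
        rcases to₂ x hx2 z hz2 with h | h
        · exact h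
        · exact absurd ⟨r, hrR, hyr, tr₂ r hrR.2 z hz2 x hx2 hrz h⟩ hne
    -- (C, C, L₁)
    · have hx2 : x ∈ L₂ := hx.resolve_left hx1
      have hy2 : y ∈ L₂ := hy.resolve_left hy1
      have hxy2 : r₂ x y := (hext2 x hx2 y hy2).mp hxy
      by_cases hz2 : z ∈ L₂
      · exact (hext2 x hx2 z hz2).mpr (tr₂ x hx2 y hy2 z hz2 hxy2 ((hext2 y hy2 z hz2).mp hyz))
      · have hne := (hCA y hy2 hy1 z hz1 hz2).mp hyz
        refine (hCA x hx2 hx1 z hz1 hz2).mpr ?_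
        rintro ⟨s, hsR, hzs, hsx⟩
        exact hne ⟨s, hsR, hzs, tr₂ s hsR.2 x hx2 y hy2 hsx hxy2⟩
    -- (C, C, C)
    · have hx2 : x ∈ L₂ := hx.resolve_left hx1
      have hy2 : y ∈ L₂ := hy.resolve_left hy1
      have hz2 : z ∈ L₂ := hz.resolve_left hz1
      exact (hext2 x hx2 z hz2).mpr (tr₂ x hx2 y hy2 z hz2
        ((hext2 x hx2 y hy2).mp hxy) ((hext2 y hy2 z hz2).mp hyz))
  · -- totality
    intro x hx y hy
    by_cases hx1 : x ∈ L₁ <;> by_cases hy1 : y ∈ L₁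
    · rcases to₁ x hx1 y hy1 with h | h
      · exact Or.inl ((hext1 x hx1 y hy1).mpr h)
      · exact Or.inr ((hext1 y hy1 x hx1).mpr h)
    · have hy2 : y ∈ L₂ := hy.resolve_left hy1
      by_cases hx2 : x ∈ L₂
      · rcases to₂ x hx2 y hy2 with h | h
        · exact Or.inl ((hext2 x hx2 y hy2).mpr h)
        · exact Or.inr ((hext2 y hy2 x hx2).mpr h)
      · by_cases h : ∃ r ∈ L₁ ∩ L₂, r₁ x r ∧ r₂ r y
        · exact Or.inl ((hAC x hx1 hx2 y hy2 hy1).mpr h)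
        · exact Or.inr ((hCA y hy2 hy1 x hx1 hx2).mpr h)
    · have hx2 : x ∈ L₂ := hx.resolve_left hx1
      by_cases hy2 : y ∈ L₂
      · rcases to₂ x hx2 y hy2 with h | h
        · exact Or.inl ((hext2 x hx2 y hy2).mpr h)
        · exact Or.inr ((hext2 y hy2 x hx2).mpr h)
      · by_cases h : ∃ r ∈ L₁ ∩ L₂, r₁ y r ∧ r₂ r x
        · exact Or.inr ((hAC y hy1 hy2 x hx2 hx1).mpr h)
        · exact Or.inl ((hCA x hx2 hx1 y hy1 hy2).mpr h)
    · have hx2 : x ∈ L₂ := hx.resolve_left hx1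
      have hy2 : y ∈ L₂ := hy.resolve_left hy1
      rcases to₂ x hx2 y hy2 with h | h
      · exact Or.inl ((hext2 x hx2 y hy2).mpr h)
      · exact Or.inr ((hext2 y hy2 x hx2).mpr h)
  · -- the separation property
    rintro l₁ ⟨h11, h1R⟩ l₂ ⟨h22, h2R⟩
    have h12 : l₁ ∉ L₂ := fun h => h1R ⟨h11, h⟩
    have h21 : l₂ ∉ L₁ := fun h => h2R ⟨h, h22⟩
    rw [hAC l₁ h11 h12 l₂ h22 h21, hCA l₂ h22 h21 l₁ h11 h12, not_not]
    constructor
    · rintro ⟨⟨r, hrR, hxr, hry⟩, -⟩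
      refine ⟨r, hrR, ⟨hxr, fun h => ?_⟩, hry, fun h => ?_⟩
      · have : l₁ = r := as₁ l₁ h11 r hrR.1 hxr h
        exact h1R (by rw [this]; exact hrR)
      · have : l₂ = r := as₂ l₂ h22 r hrR.2 h hry
        exact h2R (by rw [this]; exact hrR)
    · rintro ⟨r, hrR, ⟨ha, -⟩, hb, -⟩
      exact ⟨⟨r, hrR, ha, hb⟩, ⟨r, hrR, ha, hb⟩⟩
end

section
/- Let φ, h : ℝ → ℝ be continuous increasing bijections with φ(x) > x for all x. For k ∈ ℤ set F_k = {x ∈ ℝ : h(x) = φ^k(x)} (where φ^k denotes the k-th iterate, with negative iterates given by the inverse). If ⋃_{k ∈ ℤ} F_k is dense in ℝ and F_k is nonempty for some k ∈ ℤ, then F_k = ℝ, i.e., h = φ^k. -/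
private lemma iter_sm (φ : ℝ ≃o ℝ) (hφ : ∀ x : ℝ, x < φ x) (x : ℝ) :
    StrictMono (fun m : ℤ => (φ ^ m) x) := by
  apply strictMono_int_of_lt_succ
  intro m
  show (φ ^ m) x < (φ ^ (m+1)) x
  rw [zpow_add_one]
  exact (φ ^ m).lt_iff_lt.2 (hφ x)

theorem stmt_1 (φ h : ℝ ≃o ℝ) (hφ : ∀ x : ℝ, x < φ x)
    (F : ℤ → Set ℝ) (hF : ∀ k : ℤ, F k = {x : ℝ | h x = (φ ^ k) x})
    (hdense : Dense (⋃ k : ℤ, F k))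
    (k : ℤ) (hk : (F k).Nonempty) :
    F k = Set.univ := by
  have hcont : ∀ j : ℤ, Continuous ((φ ^ j : ℝ ≃o ℝ) : ℝ → ℝ) :=
    fun j => (φ ^ j).continuous
  have hclosed : IsClosed (F k) := by
    rw [hF k]; exact isClosed_eq h.continuous (hcont k)
  have hopen : IsOpen (F k) := by
    rw [isOpen_iff_mem_nhds]
    intro c hc
    rw [hF k] at hc
    -- the open set U
    set U : Set ℝ := {x | h x < (φ ^ (k+1)) x ∧ (φ ^ (k-1)) x < h x} with hU
    have hUopen : IsOpen U :=
      (isOpen_lt h.continuous (hcont (k+1))).inter (isOpen_lt (hcont (k-1)) h.continuous)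
    have hcU : c ∈ U := by
      constructor
      · calc h c = (φ ^ k) c := hc
          _ < (φ ^ (k+1)) c := iter_sm φ hφ c (by omega)
      · calc (φ ^ (k-1)) c < (φ ^ k) c := iter_sm φ hφ c (by omega)
          _ = h c := hc.symm
    have hsub : (⋃ j : ℤ, F j) ∩ U ⊆ F k := by
      rintro x ⟨hx1, hx2, hx3⟩
      obtain ⟨s, ⟨j, rfl⟩, hxj⟩ := hx1
      have hxj' : h x = (φ ^ j) x := by have h3 : x ∈ F j := hxj; rwa [hF j] at h3
      have hjk : j = k := by
        by_contra hne
        rcases lt_or_gt_of_ne hne with hlt | hgt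
        · have : (φ ^ j) x ≤ (φ ^ (k-1)) x :=
            (iter_sm φ hφ x).monotone (by omega)
          linarith [hx3, hxj' ▸ this]
        · have : (φ ^ (k+1)) x ≤ (φ ^ j) x :=
            (iter_sm φ hφ x).monotone (by omega)
          linarith [hx2, hxj' ▸ this]
      rw [hF k]; rw [hjk] at hxj'; exact hxj'
    have hUA : U ⊆ F k := by
      have h1 : U ⊆ closure (U ∩ ⋃ j : ℤ, F j) :=
        hdense.open_subset_closure_inter hUopen
      refine fun x hx => ?_
      have := h1 hx
      have h2 : closure (U ∩ ⋃ j : ℤ, F j) ⊆ F k :=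
        hclosed.closure_subset_iff.2 (fun y hy => hsub ⟨hy.2, hy.1⟩)
      exact h2 this
    exact Filter.mem_of_superset (hUopen.mem_nhds hcU) hUA
  exact (IsClopen.eq_univ ⟨hclosed, hopen⟩) hk
end

section
/- Let φ, h : ℝ → ℝ be continuous increasing bijections with φ(x) > x for all x ∈ ℝ. Suppose x ∈ ℝ, k ∈ ℤ, h(x) = φ^k(x), and {x_n} is a sequence converging to x with x_n > x for all n, such that h(x_n) = φ^{k_n}(x_n) with k_n > k for all n. Then a contradiction follows; i.e., no such sequence exists. (Concretely: φ^{k_n}(x_n) ≥ φ^{k+1}(x_n) for all n, and φ^{k+1}(x_n) → φ^{k+1}(x) > φ^k(x) = h(x), contradicting continuity of h.) -/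
lemma aux_le_pow (φ : ℝ ≃o ℝ) (hφ : ∀ x : ℝ, x < φ x) (n : ℕ) (y : ℝ) :
    y ≤ (φ ^ (n : ℤ)) y := by
  induction n generalizing y with
  | zero => simp
  | succ n ih =>
    have : (φ ^ ((n:ℤ) + 1)) y = (φ ^ (n:ℤ)) (φ y) := by
      rw [zpow_add, zpow_one]; rfl
    push_cast
    rw [this]
    exact le_trans (hφ y).le (ih (φ y))

lemma aux_mono (φ : ℝ ≃o ℝ) (hφ : ∀ x : ℝ, x < φ x) {m m' : ℤ} (hm : m ≤ m') (y : ℝ) :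
    (φ ^ m) y ≤ (φ ^ m') y := by
  obtain ⟨a, rfl⟩ : ∃ a, m' = a + m := ⟨m' - m, by ring⟩
  have h1 : (φ ^ (a + m)) y = (φ ^ a) ((φ ^ m) y) := by rw [zpow_add]; rfl
  rw [h1]
  have := aux_le_pow φ hφ a.toNat ((φ ^ m) y)
  rwa [Int.toNat_of_nonneg (by omega)] at this

theorem stmt_2 (φ h : ℝ ≃o ℝ) (hφ : ∀ x : ℝ, x < φ x)
    (x : ℝ) (k : ℤ) (hx : h x = (φ ^ k) x)
    (xn : ℕ → ℝ) (hlim : Filter.Tendsto xn Filter.atTop (nhds x))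
    (hgt : ∀ n, x < xn n)
    (kn : ℕ → ℤ) (hkn : ∀ n, h (xn n) = (φ ^ kn n) (xn n))
    (hbig : ∀ n, k < kn n) :
    False := by
  have hc : Continuous h := h.toHomeomorph.continuous
  have hc' : Continuous (φ ^ (k+1) : ℝ ≃o ℝ) := (φ ^ (k+1)).toHomeomorph.continuous
  have hle : ∀ n, (φ ^ (k+1)) (xn n) ≤ h (xn n) := fun n => by
    rw [hkn n]; exact aux_mono φ hφ (by have := hbig n; omega) _
  have t1 : Filter.Tendsto (fun n => (φ ^ (k+1)) (xn n)) Filter.atTop (nhds ((φ ^ (k+1)) x)) :=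
    (hc'.tendsto x).comp hlim
  have t2 : Filter.Tendsto (fun n => h (xn n)) Filter.atTop (nhds (h x)) :=
    (hc.tendsto x).comp hlim
  have hlim_le : (φ ^ (k+1)) x ≤ h x :=
    le_of_tendsto_of_tendsto' t1 t2 hle
  have hlt : h x < (φ ^ (k+1)) x := by
    rw [hx, show (k:ℤ)+1 = 1 + k by ring, zpow_add, zpow_one]
    exact hφ _
  exact absurd hlim_le (not_le.mpr hlt)
end
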